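/- For every rigid resource monomial a⃗ = (a₁,…,aₙ), Card(D^!(a⃗)) = Card(St_≅(a⃗)) · Card(D⃗(a⃗)): the number of automorphisms of a⃗ in the groupoid of permutation expressions equals the cardinality of its quasi-stabilizer times the product of the numbers of automorphisms of its components. -/

import Mathlib

set_option maxHeartbeats 1000000

/-! ### Rigid resource terms -/

/-- Rigid resource terms (de Bruijn indices for variables):
`a ::= x | λ.a | ⟨a⟩b⃗ | a⊕• | •⊕a` where argument lists are ordered. -/
inductive Rt : Type
  | var : ℕ → Rt
  | lam : Rt → Rt
  | app : Rt → List Rt → Rt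
  | inl : Rt → Rt
  | inr : Rt → Rt
deriving Inhabited

/-- Rigid resource expressions: terms or (rigid) monomials. -/
abbrev REx : Type := Rt ⊕ List Rt

/-! ### Permutation expressions -/

/-- Permutation expressions: rigid expressions with a permutation attached to
each list of arguments. -/
inductive PE : Type
  | var : ℕ → PE
  | lam : PE → PE
  | inl : PE → PE
  | inr : PE → PE
  | app : PE → PE → PE
  | mon : (n : ℕ) → Equiv.Perm (Fin n) → List PE → PE

mutual
  /-- `Maps ε a a'` means that the permutation expression `ε` maps the rigid
  term `a` to the rigid term `a'`, i.e. `ε : a ≅ a'`. -/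
  inductive Maps : PE → Rt → Rt → Prop
    | var (x : ℕ) : Maps (.var x) (.var x) (.var x)
    | lam {α a a'} : Maps α a a' → Maps (.lam α) (.lam a) (.lam a')
    | inl {α a a'} : Maps α a a' → Maps (.inl α) (.inl a) (.inl a')
    | inr {α a a'} : Maps α a a' → Maps (.inr α) (.inr a) (.inr a')
    | app {γ δ : PE} {c c' : Rt} {ds ds' : List Rt} :
        Maps γ c c' → MapsM δ ds ds' → Maps (.app γ δ) (.app c ds) (.app c' ds')
  /-- `MapsM δ b⃗ b⃗'` means that the permutation monomial `δ = (σ,α₁,…,αₙ)`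
  maps the rigid monomial `b⃗` to `b⃗'`, with `αᵢ : bᵢ ≅ b'_{σ(i)}`. -/
  inductive MapsM : PE → List Rt → List Rt → Prop
    | mon {n : ℕ} (σ : Equiv.Perm (Fin n)) (αs : List PE) (as as' : List Rt)
        (hα : αs.length = n) (ha : as.length = n) (ha' : as'.length = n)
        (H : ∀ i : Fin n,
          Maps (αs.get (i.cast hα.symm)) (as.get (i.cast ha.symm))
            (as'.get ((σ i).cast ha'.symm))) :
        MapsM (.mon n σ αs) as as'
end

/-- `ε : r ≅ r'` at the level of rigid expressions. -/
def MapsE : PE → REx → REx → Prop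
  | ε, .inl a, .inl a' => Maps ε a a'
  | δ, .inr l, .inr l' => MapsM δ l l'
  | _, _, _ => False

/-! ### Isomorphism of rigid expressions, via permutation expressions -/

/-- Two rigid terms are isomorphic (`≅`) when some permutation expression maps
one to the other. -/
def IsoT (a a' : Rt) : Prop := ∃ ε : PE, Maps ε a a'

/-- Isomorphism of rigid monomials. -/
def IsoM (l l' : List Rt) : Prop := ∃ δ : PE, MapsM δ l l'

/-- Isomorphism of rigid expressions. -/
def IsoE (r r' : REx) : Prop := ∃ ε : PE, MapsE ε r r'

namespace PE

instance : Inhabited PE := ⟨.var 0⟩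

lemma sizeOf_getD_lt (αs : List PE) (k : ℕ) : sizeOf (αs.getD k default) < 1 + sizeOf αs := by
  rcases lt_or_ge k αs.length with h | h
  · rw [List.getD_eq_getElem _ _ h]
    have := List.sizeOf_lt_of_mem (αs.getElem_mem h)
    omega
  · rw [List.getD_eq_default _ _ h]
    have h1 : sizeOf (default : PE) = 1 := by simp [default]
    have h2 : 1 ≤ sizeOf αs := by cases αs <;> simp <;> omega
    omega

lemma sizeOf_getD_lt' (αs : List PE) (k : ℕ) : sizeOf ((αs[k]?).getD default) < 1 + sizeOf αs := by
  have : (αs[k]?).getD (default : PE) = αs.getD k default := by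
    simp [List.getD]
  rw [this]; exact sizeOf_getD_lt αs k

lemma perm_apply_inv_self {n : ℕ} (σ : Equiv.Perm (Fin n)) (x : Fin n) : σ (σ⁻¹ x) = x :=
  Equiv.apply_symm_apply σ x

lemma perm_inv_apply_self {n : ℕ} (σ : Equiv.Perm (Fin n)) (x : Fin n) : σ⁻¹ (σ x) = x :=
  Equiv.symm_apply_apply σ x

def pinv : PE → PE
  | .var x => .var x
  | .lam α => .lam (pinv α)
  | .inl α => .inl (pinv α)
  | .inr α => .inr (pinv α)
  | .app γ δ => .app (pinv γ) (pinv δ)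
  | .mon n σ αs => .mon n σ⁻¹ (List.ofFn fun j : Fin n => pinv (αs.getD ((σ⁻¹ j : Fin n) : ℕ) default))
termination_by ε => sizeOf ε
decreasing_by all_goals simp_wf <;> first
  | omega
  | (have := sizeOf_getD_lt' αs ((σ⁻¹ j : Fin n) : ℕ); have := sizeOf_getD_lt' αs ((σ.symm j : Fin n) : ℕ); omega)

def pcomp : PE → PE → PE
  | .var x, _ => .var x
  | .lam α, η => match η with
    | .lam β => .lam (pcomp α β)
    | _ => default
  | .inl α, η => match η with
    | .inl β => .inl (pcomp α β)
    | _ => default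
  | .inr α, η => match η with
    | .inr β => .inr (pcomp α β)
    | _ => default
  | .app γ δ, η => match η with
    | .app γ' δ' => .app (pcomp γ γ') (pcomp δ δ')
    | _ => default
  | .mon n σ αs, η => match η with
    | .mon m τ βs =>
        .mon n (σ.trans (if h : m = n then h ▸ τ else 1))
          (List.ofFn fun i : Fin n => pcomp (αs.getD (i : ℕ) default) (βs.getD ((σ i : Fin n) : ℕ) default))
    | _ => default
termination_by ε _ => sizeOf ε
decreasing_by all_goals simp_wf <;> first
  | omega
  | (have := sizeOf_getD_lt' αs (i : ℕ); omega)

lemma pcomp_var (x : ℕ) (η : PE) : pcomp (.var x) η = .var x := by rw [pcomp]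
lemma pcomp_lam (α β : PE) : pcomp (.lam α) (.lam β) = .lam (pcomp α β) := by rw [pcomp]
lemma pcomp_inl (α β : PE) : pcomp (.inl α) (.inl β) = .inl (pcomp α β) := by rw [pcomp]
lemma pcomp_inr (α β : PE) : pcomp (.inr α) (.inr β) = .inr (pcomp α β) := by rw [pcomp]
lemma pcomp_app (γ δ γ' δ' : PE) : pcomp (.app γ δ) (.app γ' δ') = .app (pcomp γ γ') (pcomp δ δ') := by rw [pcomp]
lemma pinv_var (x : ℕ) : pinv (.var x) = .var x := by rw [pinv]
lemma pinv_lam (α : PE) : pinv (.lam α) = .lam (pinv α) := by rw [pinv]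
lemma pinv_inl (α : PE) : pinv (.inl α) = .inl (pinv α) := by rw [pinv]
lemma pinv_inr (α : PE) : pinv (.inr α) = .inr (pinv α) := by rw [pinv]
lemma pinv_app (γ δ : PE) : pinv (.app γ δ) = .app (pinv γ) (pinv δ) := by rw [pinv]

lemma getD_eq_get (l : List PE) {n : ℕ} (h : l.length = n) (i : Fin n) :
    l.getD (i : ℕ) default = l.get (i.cast h.symm) := by
  subst h
  rw [List.getD_eq_getElem _ _ i.isLt]
  simp

lemma pinv_mon (n : ℕ) (σ : Equiv.Perm (Fin n)) (αs : List PE) :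
    pinv (.mon n σ αs) =
      .mon n σ⁻¹ (List.ofFn fun j : Fin n => pinv (αs.getD ((σ⁻¹ j : Fin n) : ℕ) default)) := by
  rw [pinv]

lemma pcomp_mon (n : ℕ) (σ τ : Equiv.Perm (Fin n)) (αs βs : List PE) :
    pcomp (.mon n σ αs) (.mon n τ βs) =
      .mon n (σ.trans τ)
        (List.ofFn fun i : Fin n =>
          pcomp (αs.getD (i : ℕ) default) (βs.getD ((σ i : Fin n) : ℕ) default)) := by
  rw [pcomp]; simp

lemma sizeOf_get_lt {n : ℕ} (σ : Equiv.Perm (Fin n)) (αs : List PE) (j : Fin αs.length) :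
    sizeOf (αs.get j) < sizeOf (PE.mon n σ αs) := by
  have h1 := List.sizeOf_lt_of_mem (αs.getElem_mem j.isLt)
  simp only [List.get_eq_getElem, PE.mon.sizeOf_spec]
  exact h1.trans_le (by omega)

theorem compAux : ∀ k : ℕ,
    (∀ ε, sizeOf ε ≤ k → ∀ a a', Maps ε a a' → ∀ η a'', Maps η a' a'' →
      Maps (pcomp ε η) a a'') ∧
    (∀ δ, sizeOf δ ≤ k → ∀ l l', MapsM δ l l' → ∀ δ' l'', MapsM δ' l' l'' →
      MapsM (pcomp δ δ') l l'') := by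
  intro k
  induction k using Nat.strong_induction_on with
  | _ k ih =>
    constructor
    · intro ε hk a a' h1
      cases h1 with
      | var x => intro η a'' h2; cases h2; rw [pcomp_var]; exact .var x
      | @lam α a a' h =>
        intro η a'' h2
        cases h2 with
        | lam h' =>
          have hs : sizeOf α < k := lt_of_lt_of_le (by simp only [PE.lam.sizeOf_spec, PE.inl.sizeOf_spec, PE.inr.sizeOf_spec, PE.app.sizeOf_spec]; omega) hk
          rw [pcomp_lam]
          exact .lam ((ih _ hs).1 _ le_rfl _ _ h _ _ h')
      | @inl α a a' h =>
        intro η a'' h2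
        cases h2 with
        | inl h' =>
          have hs : sizeOf α < k := lt_of_lt_of_le (by simp only [PE.lam.sizeOf_spec, PE.inl.sizeOf_spec, PE.inr.sizeOf_spec, PE.app.sizeOf_spec]; omega) hk
          rw [pcomp_inl]
          exact .inl ((ih _ hs).1 _ le_rfl _ _ h _ _ h')
      | @inr α a a' h =>
        intro η a'' h2
        cases h2 with
        | inr h' =>
          have hs : sizeOf α < k := lt_of_lt_of_le (by simp only [PE.lam.sizeOf_spec, PE.inl.sizeOf_spec, PE.inr.sizeOf_spec, PE.app.sizeOf_spec]; omega) hk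
          rw [pcomp_inr]
          exact .inr ((ih _ hs).1 _ le_rfl _ _ h _ _ h')
      | @app γ δ c c' ds ds' hc hd =>
        intro η a'' h2
        cases h2 with
        | app hc' hd' =>
          have hs1 : sizeOf γ < k := lt_of_lt_of_le (by simp only [PE.lam.sizeOf_spec, PE.inl.sizeOf_spec, PE.inr.sizeOf_spec, PE.app.sizeOf_spec]; omega) hk
          have hs2 : sizeOf δ < k := lt_of_lt_of_le (by simp only [PE.lam.sizeOf_spec, PE.inl.sizeOf_spec, PE.inr.sizeOf_spec, PE.app.sizeOf_spec]; omega) hk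
          rw [pcomp_app]
          exact .app ((ih _ hs1).1 _ le_rfl _ _ hc _ _ hc')
            ((ih _ hs2).2 _ le_rfl _ _ hd _ _ hd')
    · intro δ hk l l' h1
      cases h1 with
      | mon σ αs _ _ hα ha ha' H =>
        intro δ' l'' h2
        cases h2 with
        | mon τ βs _ _ hβ hb hb' H' =>
          have e : _ = _ := hb.symm.trans ha'
          subst e
          rw [pcomp_mon]
          refine .mon (σ.trans τ) _ _ _ (by simp) ha hb' ?_
          intro i
          simp only [List.get_eq_getElem, List.getElem_ofFn, Fin.coe_cast, Fin.eta,
            getD_eq_get αs hα, getD_eq_get βs hβ]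
          have hs : sizeOf (αs.get ((i.cast hα.symm))) < k :=
            lt_of_lt_of_le (sizeOf_get_lt σ αs _) hk
          have := (ih _ hs).1 _ le_rfl _ _ (H i) _ _ (H' (σ i))
          simpa using this

theorem mapsComp {ε a a' η a''} (h1 : Maps ε a a') (h2 : Maps η a' a'') :
    Maps (pcomp ε η) a a'' :=
  (compAux (sizeOf ε)).1 ε le_rfl _ _ h1 _ _ h2

theorem mapsMComp {δ l l' δ' l''} (h1 : MapsM δ l l') (h2 : MapsM δ' l' l'') :
    MapsM (pcomp δ δ') l l'' :=
  (compAux (sizeOf δ)).2 δ le_rfl _ _ h1 _ _ h2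

theorem invAux : ∀ k : ℕ,
    (∀ ε, sizeOf ε ≤ k → ∀ a a', Maps ε a a' → Maps (pinv ε) a' a) ∧
    (∀ δ, sizeOf δ ≤ k → ∀ l l', MapsM δ l l' → MapsM (pinv δ) l' l) := by
  intro k
  induction k using Nat.strong_induction_on with
  | _ k ih =>
    constructor
    · intro ε hk a a' h1
      cases h1 with
      | var x => rw [pinv_var]; exact .var x
      | @lam α a a' h =>
        have hs : sizeOf α < k := lt_of_lt_of_le (by simp only [PE.lam.sizeOf_spec]; omega) hk
        rw [pinv_lam]; exact .lam ((ih _ hs).1 _ le_rfl _ _ h)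
      | @inl α a a' h =>
        have hs : sizeOf α < k := lt_of_lt_of_le (by simp only [PE.inl.sizeOf_spec]; omega) hk
        rw [pinv_inl]; exact .inl ((ih _ hs).1 _ le_rfl _ _ h)
      | @inr α a a' h =>
        have hs : sizeOf α < k := lt_of_lt_of_le (by simp only [PE.inr.sizeOf_spec]; omega) hk
        rw [pinv_inr]; exact .inr ((ih _ hs).1 _ le_rfl _ _ h)
      | @app γ δ c c' ds ds' hc hd =>
        have hs1 : sizeOf γ < k := lt_of_lt_of_le (by simp only [PE.app.sizeOf_spec]; omega) hk
        have hs2 : sizeOf δ < k := lt_of_lt_of_le (by simp only [PE.app.sizeOf_spec]; omega) hk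
        rw [pinv_app]
        exact .app ((ih _ hs1).1 _ le_rfl _ _ hc) ((ih _ hs2).2 _ le_rfl _ _ hd)
    · intro δ hk l l' h1
      cases h1 with
      | mon σ αs _ _ hα ha ha' H =>
        rw [pinv_mon]
        refine .mon σ⁻¹ _ _ _ (by simp) ha' ha ?_
        intro j
        have hs : sizeOf (αs.get ((σ⁻¹ j).cast hα.symm)) < k :=
          lt_of_lt_of_le (sizeOf_get_lt σ αs _) hk
        have := (ih _ hs).1 _ le_rfl _ _ (H (σ⁻¹ j))
        simp only [List.get_eq_getElem, List.getElem_ofFn, Fin.coe_cast, Fin.eta,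
          getD_eq_get αs hα]
        simp only [perm_apply_inv_self, Equiv.apply_symm_apply,
          List.get_eq_getElem, Fin.coe_cast] at this
        exact this

theorem mapsInv {ε a a'} (h1 : Maps ε a a') : Maps (pinv ε) a' a :=
  (invAux (sizeOf ε)).1 ε le_rfl _ _ h1

theorem mapsMInv {δ l l'} (h1 : MapsM δ l l') : MapsM (pinv δ) l' l :=
  (invAux (sizeOf δ)).2 δ le_rfl _ _ h1

theorem cancelAux : ∀ k : ℕ,
    (∀ ε, sizeOf ε ≤ k → ∀ a a', Maps ε a a' → ∀ η a'', Maps η a' a'' →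
      pcomp (pcomp ε η) (pinv η) = ε) ∧
    (∀ δ, sizeOf δ ≤ k → ∀ l l', MapsM δ l l' → ∀ δ' l'', MapsM δ' l' l'' →
      pcomp (pcomp δ δ') (pinv δ') = δ) := by
  intro k
  induction k using Nat.strong_induction_on with
  | _ k ih =>
    constructor
    · intro ε hk a a' h1
      cases h1 with
      | var x =>
        intro η a'' h2; cases h2
        rw [pcomp_var, pinv_var, pcomp_var]
      | @lam α a a' h =>
        intro η a'' h2
        cases h2 with
        | @lam β _ _ h' =>
          have hs : sizeOf α < k := lt_of_lt_of_le (by simp only [PE.lam.sizeOf_spec]; omega) hk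
          rw [pcomp_lam, pinv_lam, pcomp_lam, (ih _ hs).1 _ le_rfl _ _ h _ _ h']
      | @inl α a a' h =>
        intro η a'' h2
        cases h2 with
        | @inl β _ _ h' =>
          have hs : sizeOf α < k := lt_of_lt_of_le (by simp only [PE.inl.sizeOf_spec]; omega) hk
          rw [pcomp_inl, pinv_inl, pcomp_inl, (ih _ hs).1 _ le_rfl _ _ h _ _ h']
      | @inr α a a' h =>
        intro η a'' h2
        cases h2 with
        | @inr β _ _ h' =>
          have hs : sizeOf α < k := lt_of_lt_of_le (by simp only [PE.inr.sizeOf_spec]; omega) hk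
          rw [pcomp_inr, pinv_inr, pcomp_inr, (ih _ hs).1 _ le_rfl _ _ h _ _ h']
      | @app γ δ c c' ds ds' hc hd =>
        intro η a'' h2
        cases h2 with
        | app hc' hd' =>
          have hs1 : sizeOf γ < k := lt_of_lt_of_le (by simp only [PE.app.sizeOf_spec]; omega) hk
          have hs2 : sizeOf δ < k := lt_of_lt_of_le (by simp only [PE.app.sizeOf_spec]; omega) hk
          rw [pcomp_app, pinv_app, pcomp_app, (ih _ hs1).1 _ le_rfl _ _ hc _ _ hc',
            (ih _ hs2).2 _ le_rfl _ _ hd _ _ hd']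
    · intro δ hk l l' h1
      cases h1 with
      | mon σ αs _ _ hα ha ha' H =>
        intro δ' l'' h2
        cases h2 with
        | mon τ βs _ _ hβ hb hb' H' =>
          have e : _ = _ := hb.symm.trans ha'
          subst e
          rename_i n
          rw [pcomp_mon, pinv_mon, pcomp_mon]
          have hperm : (σ.trans τ).trans τ⁻¹ = σ := by
            ext i : 1
            simp
          rw [hperm]
          congr 1
          refine List.ext_getElem (by simp [hα]) ?_
          intro i h1i h2i
          have hin : i < n := by omega
          simp only [List.getElem_ofFn]
          rw [List.getD_eq_getElem _ _ (by simp; omega), List.getD_eq_getElem _ _ (by simp)]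
          simp only [List.getElem_ofFn, Fin.coe_cast, Fin.eta, Equiv.trans_apply,
            perm_inv_apply_self]
          rw [List.getD_eq_getElem αs _ (by omega),
            List.getD_eq_getElem βs _ (by rw [hβ]; exact (σ ⟨i, hin⟩).isLt)]
          have hs : sizeOf (αs.get ((⟨i, hin⟩ : Fin n).cast hα.symm)) < k :=
            lt_of_lt_of_le (sizeOf_get_lt σ αs _) hk
          have hrec := (ih _ hs).1 _ le_rfl _ _ (H ⟨i, hin⟩) _ _ (H' (σ ⟨i, hin⟩))
          simp only [List.get_eq_getElem, Fin.coe_cast] at hrec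
          exact hrec

theorem mapsCancel {ε a a' η a''} (h1 : Maps ε a a') (h2 : Maps η a' a'') :
    pcomp (pcomp ε η) (pinv η) = ε :=
  (cancelAux (sizeOf ε)).1 ε le_rfl _ _ h1 _ _ h2

theorem invInvAux : ∀ k : ℕ,
    (∀ ε, sizeOf ε ≤ k → ∀ a a', Maps ε a a' → pinv (pinv ε) = ε) ∧
    (∀ δ, sizeOf δ ≤ k → ∀ l l', MapsM δ l l' → pinv (pinv δ) = δ) := by
  intro k
  induction k using Nat.strong_induction_on with
  | _ k ih =>
    constructor
    · intro ε hk a a' h1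
      cases h1 with
      | var x => rw [pinv_var, pinv_var]
      | @lam α a a' h =>
        have hs : sizeOf α < k := lt_of_lt_of_le (by simp only [PE.lam.sizeOf_spec]; omega) hk
        rw [pinv_lam, pinv_lam, (ih _ hs).1 _ le_rfl _ _ h]
      | @inl α a a' h =>
        have hs : sizeOf α < k := lt_of_lt_of_le (by simp only [PE.inl.sizeOf_spec]; omega) hk
        rw [pinv_inl, pinv_inl, (ih _ hs).1 _ le_rfl _ _ h]
      | @inr α a a' h =>
        have hs : sizeOf α < k := lt_of_lt_of_le (by simp only [PE.inr.sizeOf_spec]; omega) hk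
        rw [pinv_inr, pinv_inr, (ih _ hs).1 _ le_rfl _ _ h]
      | @app γ δ c c' ds ds' hc hd =>
        have hs1 : sizeOf γ < k := lt_of_lt_of_le (by simp only [PE.app.sizeOf_spec]; omega) hk
        have hs2 : sizeOf δ < k := lt_of_lt_of_le (by simp only [PE.app.sizeOf_spec]; omega) hk
        rw [pinv_app, pinv_app, (ih _ hs1).1 _ le_rfl _ _ hc, (ih _ hs2).2 _ le_rfl _ _ hd]
    · intro δ hk l l' h1
      cases h1 with
      | mon σ αs _ _ hα ha ha' H =>
        rename_i n
        rw [pinv_mon, pinv_mon, inv_inv]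
        congr 1
        refine List.ext_getElem (by simp [hα]) ?_
        intro i h1i h2i
        have hin : i < n := by omega
        simp only [List.getElem_ofFn]
        rw [List.getD_eq_getElem _ _ (by simp)]
        simp only [List.getElem_ofFn, Fin.coe_cast, Fin.eta,
          perm_inv_apply_self]
        rw [List.getD_eq_getElem αs _ (by omega)]
        have hs : sizeOf (αs.get ((⟨i, hin⟩ : Fin n).cast hα.symm)) < k :=
          lt_of_lt_of_le (sizeOf_get_lt σ αs _) hk
        have hrec := (ih _ hs).1 _ le_rfl _ _ (H ⟨i, hin⟩)
        simp only [List.get_eq_getElem, Fin.coe_cast] at hrec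
        exact hrec

theorem mapsInvInv {ε a a'} (h1 : Maps ε a a') : pinv (pinv ε) = ε :=
  (invInvAux (sizeOf ε)).1 ε le_rfl _ _ h1

theorem mapsCancel2 {ε a a' η} (h1 : Maps ε a a') (h2 : Maps η a a') :
    pcomp (pcomp ε (pinv η)) η = ε := by
  have := mapsCancel h1 (mapsInv h2)
  rwa [mapsInvInv h2] at this

def monN : PE → ℕ
  | .mon n _ _ => n
  | _ => 0

def monPerm : (ε : PE) → Equiv.Perm (Fin ε.monN)
  | .mon _ σ _ => σ
  | .var _ => Equiv.refl _
  | .lam _ => Equiv.refl _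
  | .inl _ => Equiv.refl _
  | .inr _ => Equiv.refl _
  | .app _ _ => Equiv.refl _

def monList : PE → List PE
  | .mon _ _ l => l
  | _ => []

lemma _root_.MapsM.eta {δ : PE} {l l' : List Rt} (h : MapsM δ l l') :
    δ = .mon δ.monN δ.monPerm δ.monList := by cases h; rfl

lemma _root_.MapsM.len1 {δ : PE} {l l' : List Rt} (h : MapsM δ l l') : l.length = δ.monN := by
  cases h with | mon σ αs _ _ hα ha ha' H => exact ha

lemma _root_.MapsM.len2 {δ : PE} {l l' : List Rt} (h : MapsM δ l l') : l'.length = δ.monN := by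
  cases h with | mon σ αs _ _ hα ha ha' H => exact ha'

lemma _root_.MapsM.lenα {δ : PE} {l l' : List Rt} (h : MapsM δ l l') :
    δ.monList.length = δ.monN := by
  cases h with | mon σ αs _ _ hα ha ha' H => exact hα

lemma _root_.MapsM.spec {δ : PE} {l l' : List Rt} (h : MapsM δ l l')
    (hα : δ.monList.length = δ.monN) (ha : l.length = δ.monN) (ha' : l'.length = δ.monN)
    (i : Fin δ.monN) :
    Maps (δ.monList.get (i.cast hα.symm)) (l.get (i.cast ha.symm))
      (l'.get ((δ.monPerm i).cast ha'.symm)) := by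
  cases h with | mon σ αs _ _ hα' ha0 ha0' H => exact H i

lemma _root_.MapsM.spec' {δ : PE} {as : List Rt} (h : MapsM δ as as) (i : Fin as.length) :
    Maps (δ.monList.get ((i.cast h.len1).cast h.lenα.symm)) (as.get i)
      (as.get ((δ.monPerm (i.cast h.len1)).cast h.len1.symm)) := by
  have h2 := h.spec h.lenα h.len1 h.len2 (i.cast h.len1)
  have h1 : (i.cast h.len1).cast h.len1.symm = i := by ext; simp
  rw [h1] at h2
  exact h2

open Classical in
noncomputable def pick (a b : Rt) : PE := if h : IsoT a b then h.choose else default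

open Classical in
lemma pick_maps {a b : Rt} (h : IsoT a b) : Maps (pick a b) a b := by
  rw [pick, dif_pos h]
  exact h.choose_spec

/-- the permutation underlying an automorphism of `as` -/
def fwdPerm (as : List Rt) (δ : PE) (h : MapsM δ as as) : Equiv.Perm (Fin as.length) :=
  (finCongr h.len1).trans (δ.monPerm.trans (finCongr h.len1.symm))

lemma mon_eq_mon {n m : ℕ} (e : n = m) {σ : Equiv.Perm (Fin n)} {τ : Equiv.Perm (Fin m)}
    {L M : List PE} (hσ : ∀ i : Fin n, ((σ i : ℕ)) = ((τ (i.cast e) : ℕ))) (hL : L = M) :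
    PE.mon n σ L = PE.mon m τ M := by
  subst e; subst hL
  congr 1
  exact Equiv.ext fun i => Fin.ext (by simpa using hσ i)

noncomputable def monEquiv (as : List Rt) :
    {δ : PE // MapsM δ as as} ≃
      ({σ : Equiv.Perm (Fin as.length) // ∀ i, IsoT (as.get i) (as.get (σ i))} ×
        (∀ i : Fin as.length, {ε : PE // Maps ε (as.get i) (as.get i)})) where
  toFun x :=
    ⟨⟨fwdPerm as x.1 x.2, fun i => ⟨_, x.2.spec' i⟩⟩,
     fun i =>
      ⟨pcomp (x.1.monList.get ((i.cast x.2.len1).cast x.2.lenα.symm))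
        (pinv (pick (as.get i) (as.get (fwdPerm as x.1 x.2 i)))),
       mapsComp (x.2.spec' i) (mapsInv (pick_maps ⟨_, x.2.spec' i⟩))⟩⟩
  invFun y :=
    ⟨.mon as.length y.1.1
        (List.ofFn fun i => pcomp (y.2 i).1 (pick (as.get i) (as.get (y.1.1 i)))),
     by
      refine .mon y.1.1 _ _ _ (by simp) rfl rfl ?_
      intro i
      simp only [List.get_eq_getElem, List.getElem_ofFn]
      exact mapsComp (y.2 i).2 (pick_maps (y.1.2 i))⟩
  left_inv := by
    rintro ⟨δ, h⟩
    apply Subtype.ext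
    dsimp only
    conv_rhs => rw [h.eta]
    refine mon_eq_mon h.len1 (fun i => rfl) ?_
    refine List.ext_getElem (by simp [h.lenα, ← h.len1]) ?_
    intro i h1i h2i
    have hfin : i < as.length := by simpa using h1i
    simp only [List.getElem_ofFn]
    have hc := mapsCancel2 (h.spec' ⟨i, hfin⟩) (pick_maps ⟨_, h.spec' ⟨i, hfin⟩⟩)
    simp only [List.get_eq_getElem, Fin.coe_cast] at hc
    exact hc
  right_inv := by
    rintro ⟨⟨σ, hσ⟩, f⟩
    refine Prod.ext ?_ ?_
    · apply Subtype.ext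
      exact Equiv.ext fun i => rfl
    · funext i
      apply Subtype.ext
      dsimp only
      simp only [monList, List.get_eq_getElem, List.getElem_ofFn]
      exact mapsCancel (f i).2 (pick_maps (hσ i))

end PE


/-! ### STATEMENT 9:
For every rigid resource monomial `a⃗ = (a₁,…,aₙ)`,
`Card(D^!(a⃗)) = Card(St_≅(a⃗) × D⃗(a⃗))`: the number of automorphisms of `a⃗` in
the groupoid of permutation expressions equals the cardinality of its
quasi-stabilizer times the product of the numbers of automorphisms of its
components. -/
theorem card_monomial_automorphisms (as : List Rt) :
    Nat.card {δ : PE // MapsM δ as as} =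
      Nat.card ({σ : Equiv.Perm (Fin as.length) // ∀ i, IsoT (as.get i) (as.get (σ i))} ×
        (∀ i : Fin as.length, {ε : PE // Maps ε (as.get i) (as.get i)})) := by
  exact Nat.card_congr (PE.monEquiv as)
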